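/- arXiv:1405.0976 — 9 statements merged into one kernel-verified Lean document; each statement's English description precedes it below -/
import Mathlib

section
/- Let G be a finite group. (i) For all α, β ∈ Aut(G) one has Δ_α(G) * Δ_β(G) = Δ_{α∘β}(G). (ii) A subgroup L ≤ G×G satisfies L*M = Δ(G) = M*L for some subgroup M ≤ G×G if and only if L = Δ_α(G) for some α ∈ Aut(G). Consequently, the map α ↦ Δ_α(G) is a group isomorphism from Aut(G) onto the group of invertible elements of the monoid of all subgroups of G×G under the star product, whose identity element is Δ(G). -/
/-- The star (Bouc) product of subgroups of direct products:
`L*M := {(g,k) | ∃ h, (g,h) ∈ L ∧ (h,k) ∈ M}`. -/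
def starProd {G H K : Type*} [Group G] [Group H] [Group K]
    (L : Subgroup (G × H)) (M : Subgroup (H × K)) : Subgroup (G × K) where
  carrier := {p | ∃ h : H, (p.1, h) ∈ L ∧ (h, p.2) ∈ M}
  one_mem' := ⟨1, L.one_mem, M.one_mem⟩
  mul_mem' := by
    rintro a b ⟨h1, h1L, h1M⟩ ⟨h2, h2L, h2M⟩
    exact ⟨h1 * h2, L.mul_mem h1L h2L, M.mul_mem h1M h2M⟩
  inv_mem' := by
    rintro a ⟨h, hL, hM⟩
    exact ⟨h⁻¹, L.inv_mem hL, M.inv_mem hM⟩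

/-- `Δ_α(G) = {(α g, g) | g ∈ G}` for an automorphism `α` of `G`. -/
def deltaAut {G : Type*} [Group G] (α : MulAut G) : Subgroup (G × G) where
  carrier := {p | p.1 = α p.2}
  one_mem' := by simp
  mul_mem' := by
    rintro a b (ha : a.1 = α a.2) (hb : b.1 = α b.2)
    show a.1 * b.1 = α (a.2 * b.2)
    rw [map_mul, ha, hb]
  inv_mem' := by
    rintro a (ha : a.1 = α a.2)
    show a.1⁻¹ = α a.2⁻¹
    rw [map_inv, ha]

/-- `Δ(G) = {(g, g) | g ∈ G}`. -/
def deltaSub (G : Type*) [Group G] : Subgroup (G × G) where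
  carrier := {p | p.1 = p.2}
  one_mem' := rfl
  mul_mem' := by
    rintro a b (ha : a.1 = a.2) (hb : b.1 = b.2)
    show a.1 * b.1 = a.2 * b.2
    rw [ha, hb]
  inv_mem' := by
    rintro a (ha : a.1 = a.2)
    show a.1⁻¹ = a.2⁻¹
    rw [ha]

/-- (i) `Δ_α(G) * Δ_β(G) = Δ_{α∘β}(G)`;
(ii) `L` is invertible with respect to the star product (with identity `Δ(G)`)
iff `L = Δ_α(G)` for some automorphism `α`;
consequently (together with injectivity of `α ↦ Δ_α(G)` and the fact that `Δ(G)` is a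
two-sided identity for the star product) the map `α ↦ Δ_α(G)` is a group isomorphism
from `Aut(G)` onto the group of invertible elements of the monoid of all subgroups of
`G × G` under the star product, whose identity element is `Δ(G)`. -/
theorem statement0 (G : Type*) [Group G] [Finite G] :
    (∀ α β : MulAut G, starProd (deltaAut α) (deltaAut β) = deltaAut (α * β)) ∧
    (∀ L : Subgroup (G × G),
      (∃ M : Subgroup (G × G), starProd L M = deltaSub G ∧ starProd M L = deltaSub G) ↔
        ∃ α : MulAut G, L = deltaAut α) ∧
    Function.Injective (fun α : MulAut G => deltaAut α) ∧
    (∀ L : Subgroup (G × G), starProd (deltaSub G) L = L ∧ starProd L (deltaSub G) = L) := by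

  have hid : ∀ L : Subgroup (G × G), starProd (deltaSub G) L = L ∧ starProd L (deltaSub G) = L := by
    intro L
    constructor <;> ext ⟨g, k⟩
    · constructor
      · rintro ⟨h, (hg : g = h), hk⟩; rwa [hg]
      · intro h; exact ⟨g, rfl, h⟩
    · constructor
      · rintro ⟨h, hg, (hk : h = k)⟩; rwa [← hk]
      · intro h; exact ⟨k, h, rfl⟩
  have hmul : ∀ α β : MulAut G, starProd (deltaAut α) (deltaAut β) = deltaAut (α * β) := by
    intro α β; ext ⟨g, k⟩
    constructor
    · rintro ⟨h, (h1 : g = α h), (h2 : h = β k)⟩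
      show g = (α * β) k
      rw [h1, h2]; rfl
    · intro h
      exact ⟨β k, by rw [show g = (α * β) k from h]; rfl, rfl⟩
  have hone : deltaAut (1 : MulAut G) = deltaSub G := by
    ext ⟨g, k⟩
    exact Iff.rfl
  refine ⟨hmul, ?_, ?_, hid⟩
  · intro L
    constructor
    · rintro ⟨M, hLM, hML⟩
      have h00 : ((1:G), (1:G)) ∈ starProd M L := by rw [hML]; exact rfl
      obtain ⟨h0, hM0, hL0⟩ := h00
      have key : ∀ g : G, (g, (1:G)) ∈ L → g = h0 := by
        intro g hg
        have : (g, h0) ∈ starProd L M := ⟨1, hg, hM0⟩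
        rw [hLM] at this
        exact this
      have hL1 : ∀ g : G, (g, (1:G)) ∈ L → g = 1 := by
        intro g hg
        exact (key g hg).trans ((key 1 L.one_mem).symm)
      have hR1 : ∀ g : G, ((1:G), g) ∈ L → g = 1 := by
        intro g hg
        have hgg : (g, g) ∈ starProd M L := by rw [hML]; exact rfl
        obtain ⟨h, hM, hL⟩ := hgg
        have h1 : ((1:G), h) ∈ starProd L M := ⟨g, hg, hM⟩
        rw [hLM] at h1
        have h1' : (1:G) = h := h1
        rw [← h1'] at hM
        have h2 : (g, (1:G)) ∈ starProd M L := ⟨1, hM, L.one_mem⟩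
        rw [hML] at h2
        exact h2
      have huniq : ∀ (g2 g1 g1' : G), (g1, g2) ∈ L → (g1', g2) ∈ L → g1 = g1' := by
        intro g2 g1 g1' h1 h2
        have h3 : (g1 * g1'⁻¹, g2 * g2⁻¹) ∈ L := L.mul_mem h1 (L.inv_mem h2)
        rw [mul_inv_cancel] at h3
        exact mul_inv_eq_one.mp (hL1 _ h3)
      have ex : ∀ g2 : G, ∃ g1 : G, (g1, g2) ∈ L := by
        intro g2
        have : (g2, g2) ∈ starProd M L := by rw [hML]; exact rfl
        obtain ⟨h, _, hL⟩ := this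
        exact ⟨h, hL⟩
      set f : G → G := fun g2 => (ex g2).choose with hf
      have hfmem : ∀ g2 : G, (f g2, g2) ∈ L := fun g2 => (ex g2).choose_spec
      have hhom : ∀ a b : G, f (a * b) = f a * f b := by
        intro a b
        exact huniq (a * b) _ _ (hfmem (a * b)) (L.mul_mem (hfmem a) (hfmem b))
      have hinj : Function.Injective f := by
        intro a b hab
        have h3 : (f a * (f b)⁻¹, a * b⁻¹) ∈ L := L.mul_mem (hfmem a) (L.inv_mem (hfmem b))
        rw [hab, mul_inv_cancel] at h3
        exact mul_inv_eq_one.mp (hR1 _ h3)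
      have hbij : Function.Bijective f := Finite.injective_iff_bijective.mp hinj
      let φ : G →* G := MonoidHom.mk' f hhom
      let α : MulAut G := MulEquiv.ofBijective φ hbij
      refine ⟨α, ?_⟩
      ext ⟨g, k⟩
      constructor
      · intro hgk
        show g = α k
        exact huniq k g (f k) hgk (hfmem k)
      · intro hgk
        have : g = f k := hgk
        rw [this]
        exact hfmem k
    · rintro ⟨α, rfl⟩
      exact ⟨deltaAut α⁻¹, by rw [hmul, mul_inv_cancel, hone], by rw [hmul, inv_mul_cancel, hone]⟩
  · intro α β h
    ext g
    have h' : deltaAut α = deltaAut β := h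
    have : (α g, g) ∈ deltaAut β := by rw [← h']; exact rfl
    exact this
end

section
/- Let G and H be finite groups. There exist subgroups L ≤ G×H and M ≤ H×G with L*M = Δ(G) if and only if there exist subgroups K ⊴ P ≤ H such that P/K is isomorphic to G (i.e., G is isomorphic to a subquotient of H). -/
/-- There exist subgroups `L ≤ G×H` and `M ≤ H×G` with `L*M = Δ(G)` iff there exist
subgroups `K ⊴ P ≤ H` such that `P/K ≅ G`, i.e. iff `G` is isomorphic to a
subquotient of `H`. -/
theorem statement1 (G H : Type*) [Group G] [Group H] [Finite G] [Finite H] :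
    (∃ (L : Subgroup (G × H)) (M : Subgroup (H × G)), starProd L M = deltaSub G) ↔
      ∃ (P : Subgroup H) (K : Subgroup P) (_ : K.Normal), Nonempty (G ≃* (P ⧸ K)) := by
  constructor
  · rintro ⟨L, M, hLM⟩
    have key : ∀ (g₁ g₂ : G) (h : H), (g₁, h) ∈ L → (h, g₂) ∈ M → g₁ = g₂ := by
      intro g₁ g₂ h h1 h2
      have : (g₁, g₂) ∈ starProd L M := ⟨h, h1, h2⟩
      rw [hLM] at this
      exact this
    let P : Subgroup H :=
      { carrier := {h | ∃ g : G, (g, h) ∈ L ∧ (h, g) ∈ M}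
        one_mem' := ⟨1, L.one_mem, M.one_mem⟩
        mul_mem' := by
          rintro a b ⟨g1, h1, h1'⟩ ⟨g2, h2, h2'⟩
          exact ⟨g1 * g2, L.mul_mem h1 h2, M.mul_mem h1' h2'⟩
        inv_mem' := by
          rintro a ⟨g, h1, h2⟩
          exact ⟨g⁻¹, L.inv_mem h1, M.inv_mem h2⟩ }
    have hex : ∀ h : P, ∃ g : G, (g, (h : H)) ∈ L ∧ ((h : H), g) ∈ M := fun h => h.2
    choose f hf1 hf2 using hex
    have funiq : ∀ (h : P) (g : G), (g, (h : H)) ∈ L → ((h : H), g) ∈ M → f h = g := by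
      intro h g hg1 hg2
      exact key (f h) g h (hf1 h) hg2
    let φ : P →* G :=
      { toFun := f
        map_one' := funiq 1 1 L.one_mem M.one_mem
        map_mul' := fun a b =>
          funiq (a * b) (f a * f b) (L.mul_mem (hf1 a) (hf1 b)) (M.mul_mem (hf2 a) (hf2 b)) }
    have hsurj : Function.Surjective φ := by
      intro g
      have hg : (g, g) ∈ starProd L M := by
        rw [hLM]; exact rfl
      obtain ⟨h, h1, h2⟩ := hg
      exact ⟨⟨h, g, h1, h2⟩, funiq _ g h1 h2⟩
    exact ⟨P, φ.ker, inferInstance,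
      ⟨(QuotientGroup.quotientKerEquivOfSurjective φ hsurj).symm⟩⟩
  · rintro ⟨P, K, hK, ⟨θ⟩⟩
    let L : Subgroup (G × H) :=
      { carrier := {p | ∃ hp : p.2 ∈ P, θ p.1 = QuotientGroup.mk (⟨p.2, hp⟩ : P)}
        one_mem' := ⟨P.one_mem, by show θ 1 = _; rw [map_one]; rfl⟩
        mul_mem' := by
          rintro a b ⟨ha, hea⟩ ⟨hb, heb⟩
          exact ⟨P.mul_mem ha hb, by simp only [Prod.fst_mul, Prod.snd_mul, map_mul, hea, heb, ← QuotientGroup.mk_mul]; rfl⟩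
        inv_mem' := by
          rintro a ⟨ha, hea⟩
          exact ⟨P.inv_mem ha, by simp only [Prod.fst_inv, Prod.snd_inv, map_inv, hea, ← QuotientGroup.mk_inv]; rfl⟩ }
    let M : Subgroup (H × G) :=
      { carrier := {p | ∃ hp : p.1 ∈ P, θ p.2 = QuotientGroup.mk (⟨p.1, hp⟩ : P)}
        one_mem' := ⟨P.one_mem, by show θ 1 = _; rw [map_one]; rfl⟩
        mul_mem' := by
          rintro a b ⟨ha, hea⟩ ⟨hb, heb⟩
          exact ⟨P.mul_mem ha hb, by simp only [Prod.fst_mul, Prod.snd_mul, map_mul, hea, heb, ← QuotientGroup.mk_mul]; rfl⟩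
        inv_mem' := by
          rintro a ⟨ha, hea⟩
          exact ⟨P.inv_mem ha, by simp only [Prod.fst_inv, Prod.snd_inv, map_inv, hea, ← QuotientGroup.mk_inv]; rfl⟩ }
    refine ⟨L, M, ?_⟩
    ext ⟨g₁, g₂⟩
    constructor
    · rintro ⟨h, ⟨hp1, he1⟩, ⟨hp2, he2⟩⟩
      show g₁ = g₂
      apply θ.injective
      rw [he1, he2]
    · intro hgg
      have hgg' : g₁ = g₂ := hgg
      obtain ⟨p, hp⟩ := QuotientGroup.mk_surjective (θ g₁)
      refine ⟨(p : H), ⟨p.2, ?_⟩, ⟨p.2, ?_⟩⟩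
      · rw [← hp]
      · rw [← hgg', ← hp]
end

section
/- Let G, H, G', H' be finite groups and let L ≤ G×H, M ≤ G'×H' be subgroups. The following are equivalent: (i) there exist subgroups U ≤ G'×G and V ≤ H×H' with U*L*V = M, and subgroups U' ≤ G×G' and V' ≤ H'×H with U'*M*V' = L; (ii) the groups q(L) = p₁(L)/k₁(L) and q(M) = p₁(M)/k₁(M) are isomorphic. (In the category whose morphisms are subgroups of direct products composed via the star product, L and M lie in the same J-class if and only if q(L) ≅ q(M).) -/
/-- `p₁(L)`, the image of `L ≤ G×H` under the first projection. -/
def proj1 {G H : Type*} [Group G] [Group H] (L : Subgroup (G × H)) : Subgroup G :=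
  L.map (MonoidHom.fst G H)

/-- `k₁(L) = {g | (g,1) ∈ L}` for `L ≤ G×H`. -/
def ker1 {G H : Type*} [Group G] [Group H] (L : Subgroup (G × H)) : Subgroup G :=
  L.comap (MonoidHom.inl G H)

/-- `k₁(L)` is a normal subgroup of `p₁(L)`. -/
instance ker1_normal {G H : Type*} [Group G] [Group H] (L : Subgroup (G × H)) :
    ((ker1 L).subgroupOf (proj1 L)).Normal := by
  constructor
  intro n hn g
  rw [Subgroup.mem_subgroupOf] at hn ⊢
  obtain ⟨x, hxL, hx⟩ := Subgroup.mem_map.mp g.2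
  have hn' : ((↑n : G), (1 : H)) ∈ L := hn
  have hmem : x * ((↑n : G), (1 : H)) * x⁻¹ ∈ L :=
    L.mul_mem (L.mul_mem hxL hn') (L.inv_mem hxL)
  have h1 : x.1 = (↑g : G) := hx
  have heq : x * ((↑n : G), (1 : H)) * x⁻¹ = ((↑(g * n * g⁻¹) : G), (1 : H)) := by
    ext
    · simp [h1]
    · simp
  show ((↑(g * n * g⁻¹) : G), (1 : H)) ∈ L
  rw [← heq]
  exact hmem

/-- `q(L) = p₁(L)/k₁(L)` for `L ≤ G×H`. -/
abbrev qGrp {G H : Type*} [Group G] [Group H] (L : Subgroup (G × H)) :=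
  proj1 L ⧸ (ker1 L).subgroupOf (proj1 L)

section Aux

variable {A B C : Type*} [Group A] [Group B] [Group C]

lemma mem_starProd {X : Subgroup (A × B)} {Y : Subgroup (B × C)} {p : A × C} :
    p ∈ starProd X Y ↔ ∃ b : B, (p.1, b) ∈ X ∧ (b, p.2) ∈ Y := Iff.rfl

lemma mem_proj1 {L : Subgroup (A × B)} {a : A} : a ∈ proj1 L ↔ ∃ b, (a, b) ∈ L := by
  constructor
  · rintro ⟨⟨x, y⟩, hxy, rfl⟩
    exact ⟨y, hxy⟩
  · rintro ⟨b, hb⟩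
    exact ⟨(a, b), hb, rfl⟩

lemma qmk_eq_iff {L : Subgroup (A × B)} {a b : A} (ha : a ∈ proj1 L) (hb : b ∈ proj1 L) :
    (QuotientGroup.mk ⟨a, ha⟩ : qGrp L) = QuotientGroup.mk ⟨b, hb⟩ ↔ (a⁻¹ * b, (1 : B)) ∈ L := by
  rw [QuotientGroup.eq, Subgroup.mem_subgroupOf]
  exact Iff.rfl

def SubQ (A B : Type*) [Group A] [Group B] : Prop :=
  ∃ (S : Subgroup A) (f : S →* B), Function.Surjective f

lemma SubQ.card_le {A B : Type*} [Group A] [Group B] [Finite A] (h : SubQ A B) :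
    Nat.card B ≤ Nat.card A := by
  obtain ⟨S, f, hf⟩ := h
  calc Nat.card B ≤ Nat.card S := Nat.card_le_card_of_surjective f hf
    _ ≤ Nat.card A := Nat.card_le_card_of_injective _ S.subtype_injective

lemma SubQ.trans {A B C : Type*} [Group A] [Group B] [Group C]
    (h1 : SubQ A B) (h2 : SubQ B C) : SubQ A C := by
  obtain ⟨S, f, hf⟩ := h1
  obtain ⟨T, g, hg⟩ := h2
  let f' : (T.comap f) →* T := (f.comp (T.comap f).subtype).codRestrict T (fun x => x.2)
  have hf' : Function.Surjective f' := by
    intro t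
    obtain ⟨s, hs⟩ := hf t.1
    exact ⟨⟨s, by simp [Subgroup.mem_comap, hs]⟩, by ext; exact hs⟩
  let e : (T.comap f) ≃* ((T.comap f).map S.subtype) :=
    Subgroup.equivMapOfInjective _ _ S.subtype_injective
  exact ⟨(T.comap f).map S.subtype, (g.comp f').comp e.symm.toMonoidHom,
    (hg.comp hf').comp e.symm.surjective⟩

lemma SubQ.congr {A A' B B' : Type*} [Group A] [Group A'] [Group B] [Group B']
    (eA : A ≃* A') (eB : B ≃* B') (h : SubQ A B) : SubQ A' B' := by
  obtain ⟨S, f, hf⟩ := h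
  let e : S ≃* (S.map eA.toMonoidHom) := Subgroup.equivMapOfInjective _ _ eA.injective
  exact ⟨S.map eA.toMonoidHom, (eB.toMonoidHom.comp f).comp e.symm.toMonoidHom,
    (eB.surjective.comp hf).comp e.symm.surjective⟩

lemma SubQ.antisymm {A B : Type*} [Group A] [Group B] [Finite A] [Finite B]
    (h1 : SubQ A B) (h2 : SubQ B A) : Nonempty (A ≃* B) := by
  have c1 := h1.card_le
  have c2 := h2.card_le
  obtain ⟨S, f, hf⟩ := h1
  have hBS : Nat.card B ≤ Nat.card S := Nat.card_le_card_of_surjective f hf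
  have hSA : Nat.card S ≤ Nat.card A := Nat.card_le_card_of_injective _ S.subtype_injective
  have hAB : Nat.card A = Nat.card B := le_antisymm c2 c1
  have hS : Nat.card S = Nat.card A := le_antisymm hSA (hAB ▸ hBS)
  have hStop : S = ⊤ := Subgroup.eq_top_of_card_eq S hS
  have hbij : Function.Bijective f :=
    (Nat.bijective_iff_surjective_and_card f).mpr ⟨hf, hS.trans hAB⟩
  exact ⟨(Subgroup.topEquiv.symm.trans (MulEquiv.subgroupCongr hStop.symm)).trans
    (MulEquiv.ofBijective f hbij)⟩

end Aux
section Swap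

variable {A B C : Type*} [Group A] [Group B] [Group C]

def swapSub (W : Subgroup (A × B)) : Subgroup (B × A) :=
  W.map (MulEquiv.prodComm : A × B ≃* B × A).toMonoidHom

lemma mem_swapSub {W : Subgroup (A × B)} {p : B × A} : p ∈ swapSub W ↔ (p.2, p.1) ∈ W := by
  constructor
  · rintro ⟨⟨x, y⟩, h, rfl⟩
    exact h
  · intro h
    exact ⟨(p.2, p.1), h, rfl⟩

lemma swapSub_starProd (X : Subgroup (A × B)) (Y : Subgroup (B × C)) :
    swapSub (starProd X Y) = starProd (swapSub Y) (swapSub X) := by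
  ext ⟨c, a⟩
  rw [mem_swapSub, mem_starProd, mem_starProd]
  constructor
  · rintro ⟨b, hX, hY⟩
    exact ⟨b, mem_swapSub.mpr hY, mem_swapSub.mpr hX⟩
  · rintro ⟨b, hY, hX⟩
    exact ⟨b, mem_swapSub.mp hX, mem_swapSub.mp hY⟩

lemma qGrp_iso_swap (L : Subgroup (A × B)) : Nonempty (qGrp L ≃* qGrp (swapSub L)) := by
  let fstr : ↥L →* ↥(proj1 L) :=
    ((MonoidHom.fst A B).comp L.subtype).codRestrict (proj1 L)
      (fun x => Subgroup.mem_map.mpr ⟨↑x, x.2, rfl⟩)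
  let sndr : ↥L →* ↥(proj1 (swapSub L)) :=
    ((MonoidHom.snd A B).comp L.subtype).codRestrict (proj1 (swapSub L))
      (fun x => mem_proj1.mpr ⟨(x : A × B).1, mem_swapSub.mpr x.2⟩)
  let Φ : ↥L →* qGrp L := (QuotientGroup.mk' _).comp fstr
  let Ψ : ↥L →* qGrp (swapSub L) := (QuotientGroup.mk' _).comp sndr
  have hΦ : Function.Surjective Φ := by
    intro q
    obtain ⟨s, rfl⟩ := QuotientGroup.mk'_surjective _ q
    obtain ⟨x, hx, hx1⟩ := Subgroup.mem_map.mp s.2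
    refine ⟨⟨x, hx⟩, ?_⟩
    have he : fstr ⟨x, hx⟩ = s := Subtype.ext hx1
    show (QuotientGroup.mk' _) (fstr ⟨x, hx⟩) = _
    rw [he]
  have hΨ : Function.Surjective Ψ := by
    intro q
    obtain ⟨s, rfl⟩ := QuotientGroup.mk'_surjective _ q
    obtain ⟨b, hb⟩ := mem_proj1.mp s.2
    have hb' : (((s : B), b).2, ((s : B), b).1) ∈ L := mem_swapSub.mp hb
    refine ⟨⟨(b, (s : B)), hb'⟩, ?_⟩
    have he : sndr ⟨(b, (s : B)), hb'⟩ = s := Subtype.ext rfl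
    show (QuotientGroup.mk' _) (sndr ⟨(b, (s : B)), hb'⟩) = _
    rw [he]
  have hker : Φ.ker = Ψ.ker := by
    ext x
    have hx := x.2
    simp only [MonoidHom.mem_ker]
    show Φ x = 1 ↔ Ψ x = 1
    rw [show Φ x = QuotientGroup.mk (fstr x) from rfl,
        show Ψ x = QuotientGroup.mk (sndr x) from rfl,
        QuotientGroup.eq_one_iff, QuotientGroup.eq_one_iff,
        Subgroup.mem_subgroupOf, Subgroup.mem_subgroupOf]
    show ((x : A × B).1, (1 : B)) ∈ L ↔ (((x : A × B).2, (1 : A)) : B × A) ∈ swapSub L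
    rw [mem_swapSub]
    constructor
    · intro h
      have h2 := L.mul_mem (L.inv_mem h) hx
      have he : (((x : A × B).1, (1 : B)))⁻¹ * (x : A × B) = (1, (x : A × B).2) := by
        ext <;> simp
      rwa [he] at h2
    · intro h
      have h2 := L.mul_mem hx (L.inv_mem h)
      have he : (x : A × B) * ((1 : A), (x : A × B).2)⁻¹ = ((x : A × B).1, 1) := by
        ext <;> simp
      rwa [he] at h2
  exact ⟨((QuotientGroup.quotientKerEquivOfSurjective Φ hΦ).symm.trans
    (QuotientGroup.quotientMulEquivOfEq hker)).trans
    (QuotientGroup.quotientKerEquivOfSurjective Ψ hΨ)⟩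

end Swap
section StarSubQ

variable {A B C : Type*} [Group A] [Group B] [Group C]

lemma subq_star_left (X : Subgroup (A × B)) (Y : Subgroup (B × C)) :
    SubQ (qGrp X) (qGrp (starProd X Y)) := by
  set N := starProd X Y with hNdef
  have hN1 : ∀ a : A, a ∈ proj1 N → a ∈ proj1 X := by
    intro a ha
    obtain ⟨c, b, hb, _⟩ := mem_proj1.mp ha
    exact mem_proj1.mpr ⟨b, hb⟩
  let ι : ↥(proj1 N) →* ↥(proj1 X) := Subgroup.inclusion hN1
  let ψ : ↥(proj1 N) →* qGrp X := (QuotientGroup.mk' _).comp ι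
  let φ : ↥(proj1 N) →* qGrp N := QuotientGroup.mk' _
  have hker : ∀ x ∈ ψ.ker, φ x = 1 := by
    intro x hx
    have hX : ((x : A), (1 : B)) ∈ X := by
      have h1 : QuotientGroup.mk (ι x) = (1 : qGrp X) := hx
      exact Subgroup.mem_subgroupOf.mp ((QuotientGroup.eq_one_iff _).mp h1)
    have hNmem : ((x : A), (1 : C)) ∈ N := ⟨1, hX, Y.one_mem⟩
    show QuotientGroup.mk x = (1 : qGrp N)
    exact (QuotientGroup.eq_one_iff _).mpr (Subgroup.mem_subgroupOf.mpr hNmem)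
  refine ⟨ψ.range,
    (QuotientGroup.lift ψ.ker φ hker).comp
      (QuotientGroup.quotientKerEquivRange ψ).symm.toMonoidHom, ?_⟩
  have h1 : Function.Surjective (QuotientGroup.lift ψ.ker φ hker) := by
    intro q
    obtain ⟨x, rfl⟩ := QuotientGroup.mk'_surjective _ q
    exact ⟨QuotientGroup.mk x, rfl⟩
  exact h1.comp (QuotientGroup.quotientKerEquivRange ψ).symm.surjective

lemma subq_of_factor {G H G' H' : Type*} [Group G] [Group H] [Group G'] [Group H']
    (L : Subgroup (G × H)) (M : Subgroup (G' × H')) (U : Subgroup (G' × G)) (V : Subgroup (H × H'))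
    (hf : starProd (starProd U L) V = M) : SubQ (qGrp L) (qGrp M) := by
  have s1 : SubQ (qGrp (starProd U L)) (qGrp M) := hf ▸ subq_star_left (starProd U L) V
  have s2 : SubQ (qGrp (swapSub L)) (qGrp (swapSub (starProd U L))) := by
    rw [swapSub_starProd]
    exact subq_star_left (swapSub L) (swapSub U)
  have e1 := (qGrp_iso_swap L).some
  have e2 := (qGrp_iso_swap (starProd U L)).some
  exact (s2.congr e1.symm e2.symm).trans s1

end StarSubQ
section Converse

lemma exists_factor {G H G' H' : Type*} [Group G] [Group H] [Group G'] [Group H']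
    (L : Subgroup (G × H)) (M : Subgroup (G' × H')) (e : qGrp L ≃* qGrp M) :
    ∃ (U : Subgroup (G' × G)) (V : Subgroup (H × H')), starProd (starProd U L) V = M := by
  refine ⟨
    { carrier := {p : G' × G | ∃ (hg : p.2 ∈ proj1 L) (hg' : p.1 ∈ proj1 M),
        e (QuotientGroup.mk ⟨p.2, hg⟩) = QuotientGroup.mk ⟨p.1, hg'⟩}
      one_mem' := ⟨(proj1 L).one_mem, (proj1 M).one_mem, by
        show e (QuotientGroup.mk 1) = QuotientGroup.mk 1
        simp⟩
      mul_mem' := ?_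
      inv_mem' := ?_ },
    { carrier := {p : H × H' | ∃ (g : G) (g' : G') (hg : g ∈ proj1 L) (hg' : g' ∈ proj1 M),
        (g, p.1) ∈ L ∧ (g', p.2) ∈ M ∧
        e (QuotientGroup.mk ⟨g, hg⟩) = QuotientGroup.mk ⟨g', hg'⟩}
      one_mem' := ⟨1, 1, (proj1 L).one_mem, (proj1 M).one_mem, L.one_mem, M.one_mem, by
        show e (QuotientGroup.mk 1) = QuotientGroup.mk 1
        simp⟩
      mul_mem' := ?_
      inv_mem' := ?_ }, ?_⟩
  · rintro p q ⟨hg, hg', he⟩ ⟨kg, kg', ke⟩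
    refine ⟨mul_mem hg kg, mul_mem hg' kg', ?_⟩
    show e (QuotientGroup.mk (⟨p.2, hg⟩ * ⟨q.2, kg⟩)) =
      QuotientGroup.mk (⟨p.1, hg'⟩ * ⟨q.1, kg'⟩)
    rw [QuotientGroup.mk_mul, QuotientGroup.mk_mul, map_mul, he, ke]
  · rintro p ⟨hg, hg', he⟩
    refine ⟨inv_mem hg, inv_mem hg', ?_⟩
    show e (QuotientGroup.mk (⟨p.2, hg⟩⁻¹)) = QuotientGroup.mk (⟨p.1, hg'⟩⁻¹)
    rw [QuotientGroup.mk_inv, QuotientGroup.mk_inv, map_inv, he]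
  · rintro p q ⟨g, g', hg, hg', hL, hM, he⟩ ⟨a, a', ha, ha', haL, haM, he2⟩
    refine ⟨g * a, g' * a', mul_mem hg ha, mul_mem hg' ha',
      L.mul_mem hL haL, M.mul_mem hM haM, ?_⟩
    show e (QuotientGroup.mk (⟨g, hg⟩ * ⟨a, ha⟩)) =
      QuotientGroup.mk (⟨g', hg'⟩ * ⟨a', ha'⟩)
    rw [QuotientGroup.mk_mul, QuotientGroup.mk_mul, map_mul, he, he2]
  · rintro p ⟨g, g', hg, hg', hL, hM, he⟩
    refine ⟨g⁻¹, g'⁻¹, inv_mem hg, inv_mem hg', L.inv_mem hL, M.inv_mem hM, ?_⟩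
    show e (QuotientGroup.mk (⟨g, hg⟩⁻¹)) = QuotientGroup.mk (⟨g', hg'⟩⁻¹)
    rw [QuotientGroup.mk_inv, QuotientGroup.mk_inv, map_inv, he]
  · ext ⟨x', y'⟩
    rw [mem_starProd]
    constructor
    · rintro ⟨h, hUL, hV⟩
      obtain ⟨g, hU, hgL⟩ := mem_starProd.mp hUL
      obtain ⟨hgL1, hx'M, heU⟩ := hU
      obtain ⟨a, a', haL1, ha'M1, haL, ha'M, heV⟩ := hV
      -- mk g = mk a in qGrp L
      have hga : (g⁻¹ * a, (1 : H)) ∈ L := by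
        have h2 := L.mul_mem (L.inv_mem hgL) haL
        have he3 : ((g, h) : G × H)⁻¹ * (a, h) = (g⁻¹ * a, 1) := by
          ext <;> simp
        rwa [he3] at h2
      have h1 : (QuotientGroup.mk ⟨g, hgL1⟩ : qGrp L) = QuotientGroup.mk ⟨a, haL1⟩ :=
        (qmk_eq_iff hgL1 haL1).mpr hga
      have h2 : (QuotientGroup.mk ⟨x', hx'M⟩ : qGrp M) = QuotientGroup.mk ⟨a', ha'M1⟩ := by
        rw [← heU, h1, heV]
      have hk : (x'⁻¹ * a', (1 : H')) ∈ M := (qmk_eq_iff hx'M ha'M1).mp h2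
      have h3 := M.mul_mem ha'M (M.inv_mem hk)
      have he4 : ((a', y') : G' × H') * (x'⁻¹ * a', (1 : H'))⁻¹ = (x', y') := by
        ext <;> simp [mul_inv_rev]
      rwa [he4] at h3
    · intro hM
      have hx'1 : x' ∈ proj1 M := mem_proj1.mpr ⟨y', hM⟩
      obtain ⟨qL, hqL⟩ : ∃ q : qGrp L, e q = QuotientGroup.mk ⟨x', hx'1⟩ :=
        ⟨e.symm _, e.apply_symm_apply _⟩
      obtain ⟨s, rfl⟩ := QuotientGroup.mk_surjective qL
      obtain ⟨b, hb⟩ := mem_proj1.mp s.2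
      refine ⟨b, mem_starProd.mpr ⟨(s : G), ⟨s.2, hx'1, ?_⟩, hb⟩,
        ⟨(s : G), x', s.2, hx'1, hb, hM, ?_⟩⟩
      · rw [show (⟨(s : G), s.2⟩ : ↥(proj1 L)) = s from rfl]
        exact hqL
      · rw [show (⟨(s : G), s.2⟩ : ↥(proj1 L)) = s from rfl]
        exact hqL

end Converse


/-- `L ≤ G×H` and `M ≤ G'×H'` lie in the same J-class of the category of finite groups
with subgroups of direct products as morphisms (composed via the star product), i.e.
each of `L` and `M` can be obtained from the other by pre- and post-composition,
if and only if `q(L) ≅ q(M)`. -/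
theorem statement2 (G H G' H' : Type*) [Group G] [Group H] [Group G'] [Group H']
    [Finite G] [Finite H] [Finite G'] [Finite H']
    (L : Subgroup (G × H)) (M : Subgroup (G' × H')) :
    ((∃ (U : Subgroup (G' × G)) (V : Subgroup (H × H')),
        starProd (starProd U L) V = M) ∧
      (∃ (U' : Subgroup (G × G')) (V' : Subgroup (H' × H)),
        starProd (starProd U' M) V' = L)) ↔
      Nonempty (qGrp L ≃* qGrp M) := by
  constructor
  · rintro ⟨⟨U, V, hUV⟩, ⟨U', V', hU'V'⟩⟩
    exact SubQ.antisymm (subq_of_factor L M U V hUV) (subq_of_factor M L U' V' hU'V')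
  · rintro ⟨e⟩
    exact ⟨exists_factor L M e, exists_factor M L e.symm⟩
end

section
/- Let G and H be finite groups, let K ⊴ P ≤ G be subgroups, let η : H → P/K be a group isomorphism, and let L := {(g,h) ∈ G×H | g ∈ P and gK = η(h)} ≤ G×H. Then, inside Aut(G)×Aut(H), one has the inclusion of subset products stab(L)·({1}×Inn(H)) ⊆ (Inn(G)×{1})·stab(L); in particular, for every β ∈ Inn(H) there exists α ∈ Inn(G) with (α,β) ∈ stab(L). -/
open Pointwise

/-- The subgroup `L = {(g,h) ∈ G×H | g ∈ P ∧ gK = η(h)}` of `G × H` attached to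
a section `K ⊴ P ≤ G` and an isomorphism `η : H ≃ P/K`. -/
def goursat {G H : Type*} [Group G] [Group H] (P : Subgroup G) (K : Subgroup P)
    [K.Normal] (η : H ≃* P ⧸ K) : Subgroup (G × H) where
  carrier := {p | ∃ hp : p.1 ∈ P, (QuotientGroup.mk (⟨p.1, hp⟩ : P) : P ⧸ K) = η p.2}
  one_mem' := by
    refine ⟨P.one_mem, ?_⟩
    show (QuotientGroup.mk (1 : P) : P ⧸ K) = η 1
    simp
  mul_mem' := by
    rintro a b ⟨ha, hqa⟩ ⟨hb, hqb⟩
    refine ⟨P.mul_mem ha hb, ?_⟩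
    show (QuotientGroup.mk ((⟨a.1, ha⟩ : P) * (⟨b.1, hb⟩ : P)) : P ⧸ K) = η (a.2 * b.2)
    rw [QuotientGroup.mk_mul, hqa, hqb, map_mul]
  inv_mem' := by
    rintro a ⟨ha, hqa⟩
    refine ⟨P.inv_mem ha, ?_⟩
    show (QuotientGroup.mk ((⟨a.1, ha⟩ : P)⁻¹) : P ⧸ K) = η a.2⁻¹
    rw [QuotientGroup.mk_inv, hqa, map_inv]

/-- The stabilizer of `L ≤ G×H` under the action of `Aut(G) × Aut(H)` on subgroups
of `G × H` given by applying `α × β`. -/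
def stabSet {G H : Type*} [Group G] [Group H] (L : Subgroup (G × H)) :
    Set (MulAut G × MulAut H) :=
  {ab | Subgroup.map (MulEquiv.prodCongr ab.1 ab.2).toMonoidHom L = L}

lemma conj_mem_goursat {G H : Type*} [Group G] [Group H] (P : Subgroup G) (K : Subgroup P)
    [K.Normal] (η : H ≃* P ⧸ K) (g : P) (h : H)
    (hgh : (QuotientGroup.mk g : P ⧸ K) = η h) {p : G × H} (hp : p ∈ goursat P K η) :
    ((g : G) * p.1 * (g : G)⁻¹, h * p.2 * h⁻¹) ∈ goursat P K η := by
  obtain ⟨hp1, hq⟩ := hp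
  refine ⟨mul_mem (mul_mem g.2 hp1) (inv_mem g.2), ?_⟩
  show (QuotientGroup.mk (g * ⟨p.1, hp1⟩ * g⁻¹) : P ⧸ K) = η (h * p.2 * h⁻¹)
  rw [QuotientGroup.mk_mul, QuotientGroup.mk_mul, QuotientGroup.mk_inv, hgh, hq,
    map_mul, map_mul, map_inv]

lemma conj_mem_stab {G H : Type*} [Group G] [Group H] (P : Subgroup G) (K : Subgroup P)
    [K.Normal] (η : H ≃* P ⧸ K) (g : P) (h : H)
    (hgh : (QuotientGroup.mk g : P ⧸ K) = η h) :
    (MulAut.conj (g : G), MulAut.conj h) ∈ stabSet (goursat P K η) := by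
  have hinv : (QuotientGroup.mk g⁻¹ : P ⧸ K) = η h⁻¹ := by
    rw [QuotientGroup.mk_inv, hgh, map_inv]
  ext p
  simp only [Subgroup.mem_map, MulEquiv.coe_toMonoidHom]
  constructor
  · rintro ⟨q, hq, rfl⟩
    exact conj_mem_goursat P K η g h hgh hq
  · intro hpL
    refine ⟨((g : G)⁻¹ * p.1 * (g : G), h⁻¹ * p.2 * h), ?_, ?_⟩
    · have := conj_mem_goursat P K η g⁻¹ h⁻¹ hinv hpL
      simpa using this
    · show (MulAut.conj (g:G) _, MulAut.conj h _) = p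
      simp [MulAut.conj_apply, mul_assoc]

lemma stab_mul {G H : Type*} [Group G] [Group H] (L : Subgroup (G × H))
    {a b : MulAut G × MulAut H} (ha : a ∈ stabSet L) (hb : b ∈ stabSet L) :
    a * b ∈ stabSet L := by
  have hcomp : (MulEquiv.prodCongr (a * b).1 (a * b).2).toMonoidHom =
      ((MulEquiv.prodCongr a.1 a.2).toMonoidHom).comp
        (MulEquiv.prodCongr b.1 b.2).toMonoidHom := by
    ext x <;> rfl
  show Subgroup.map _ L = L
  rw [hcomp, ← Subgroup.map_map, hb, ha]

example {G : Type*} [Group G] (s : MulAut G) (g : G) :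
    s * MulAut.conj g * s⁻¹ = MulAut.conj (s g) := by
  ext x
  simp [MulAut.conj_apply, MulAut.mul_apply, map_mul]

lemma inn_conj {G : Type*} [Group G] (s : MulAut G) (g : G) :
    s * MulAut.conj g * s⁻¹ = MulAut.conj (s g) := by
  ext x
  simp [MulAut.conj_apply, MulAut.mul_apply, map_mul]

/-- For the subgroup `L = {(g,h) | g ∈ P, gK = η(h)}` one has, inside
`Aut(G) × Aut(H)`, the inclusion of subset products
`stab(L)·({1} × Inn(H)) ⊆ (Inn(G) × {1})·stab(L)`; in particular, for every
`β ∈ Inn(H)` there exists `α ∈ Inn(G)` with `(α,β) ∈ stab(L)`. -/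
theorem statement3 (G H : Type*) [Group G] [Group H] [Finite G] [Finite H]
    (P : Subgroup G) (K : Subgroup P) [K.Normal] (η : H ≃* P ⧸ K) :
    (stabSet (goursat P K η) *
        (({1} : Set (MulAut G)) ×ˢ (((MulAut.conj : H →* MulAut H).range : Subgroup (MulAut H)) :
          Set (MulAut H))) ⊆
      ((((MulAut.conj : G →* MulAut G).range : Subgroup (MulAut G)) : Set (MulAut G)) ×ˢ
          ({1} : Set (MulAut H))) * stabSet (goursat P K η)) ∧
    ∀ β ∈ (MulAut.conj : H →* MulAut H).range,
      ∃ α ∈ (MulAut.conj : G →* MulAut G).range, (α, β) ∈ stabSet (goursat P K η) := by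
  constructor
  · rintro x hx
    obtain ⟨a, ha, b, hb, rfl⟩ := Set.mem_mul.mp hx
    obtain ⟨hb1, hb2⟩ := hb
    obtain ⟨h, hh⟩ := hb2
    have hb1' : b.1 = 1 := hb1
    have hb' : b = (1, MulAut.conj h) := Prod.ext hb1' hh.symm
    subst hb'
    obtain ⟨g, hg⟩ := QuotientGroup.mk_surjective (η h)
    have hstab := conj_mem_stab P K η g h hg
    have h2 : a * (MulAut.conj (g : G), MulAut.conj h) ∈ stabSet (goursat P K η) :=
      stab_mul _ ha hstab
    refine Set.mem_mul.mpr ⟨(a.1 * (MulAut.conj (g : G))⁻¹ * a.1⁻¹, 1), ⟨?_, rfl⟩,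
      a * (MulAut.conj (g : G), MulAut.conj h), h2, ?_⟩
    · refine ⟨a.1 ((g : G)⁻¹), ?_⟩
      rw [map_inv a.1, map_inv MulAut.conj, ← inn_conj]
      group
    · refine Prod.ext ?_ ?_
      · show a.1 * (MulAut.conj (g : G))⁻¹ * a.1⁻¹ * (a.1 * MulAut.conj (g : G)) = a.1 * 1
        group
      · show 1 * (a.2 * MulAut.conj h) = a.2 * MulAut.conj h
        group
  · rintro β ⟨h, rfl⟩
    obtain ⟨g, hg⟩ := QuotientGroup.mk_surjective (η h)
    exact ⟨MulAut.conj (g : G), ⟨(g : G), rfl⟩, conj_mem_stab P K η g h hg⟩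
end

section
/- Let G and H be finite groups, let K ⊴ P ≤ G be subgroups, let η : H → P/K be a group isomorphism, and let L := {(g,h) ∈ G×H | g ∈ P and gK = η(h)} ≤ G×H. Let V be an irreducible complex representation of Aut(G) on which every inner automorphism of G acts as the identity, and let W be an irreducible complex representation of Aut(H), with characters χ_V and χ_W. If Σ_{(α,β) ∈ stab(L)} χ_V(α)·χ_W(β⁻¹) ≠ 0, then every inner automorphism of H acts as the identity on W. -/
open CategoryTheory

section Aux
variable {G H : Type*} [Group G] [Group H]

lemma prodCongr_mul_toMonoidHom (a b : MulAut G × MulAut H) :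
    (MulEquiv.prodCongr (a.1 * b.1) (a.2 * b.2)).toMonoidHom
      = (MulEquiv.prodCongr a.1 a.2).toMonoidHom.comp (MulEquiv.prodCongr b.1 b.2).toMonoidHom :=
  MonoidHom.ext fun _ => rfl

lemma map_prodCongr_mul (L : Subgroup (G × H)) (a b : MulAut G × MulAut H) :
    Subgroup.map (MulEquiv.prodCongr (a.1 * b.1) (a.2 * b.2)).toMonoidHom L
      = Subgroup.map (MulEquiv.prodCongr a.1 a.2).toMonoidHom
          (Subgroup.map (MulEquiv.prodCongr b.1 b.2).toMonoidHom L) := by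
  rw [Subgroup.map_map, prodCongr_mul_toMonoidHom]

def stabSubgroup (L : Subgroup (G × H)) : Subgroup (MulAut G × MulAut H) where
  carrier := stabSet L
  one_mem' := by
    show Subgroup.map (MulEquiv.prodCongr (1 : MulAut G) (1 : MulAut H)).toMonoidHom L = L
    have : (MulEquiv.prodCongr (1 : MulAut G) (1 : MulAut H)).toMonoidHom
        = MonoidHom.id (G × H) := MonoidHom.ext fun _ => rfl
    rw [this, Subgroup.map_id]
  mul_mem' := by
    intro a b ha hb
    show Subgroup.map (MulEquiv.prodCongr (a*b).1 (a*b).2).toMonoidHom L = L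
    have := map_prodCongr_mul L a b
    simp only [Prod.fst_mul, Prod.snd_mul] at this ⊢
    rw [this, hb, ha]
  inv_mem' := by
    intro a ha
    show Subgroup.map (MulEquiv.prodCongr a⁻¹.1 a⁻¹.2).toMonoidHom L = L
    have h1 := map_prodCongr_mul L a⁻¹ a
    rw [ha] at h1
    have h2 : a⁻¹.1 * a.1 = 1 := by simp
    have h3 : a⁻¹.2 * a.2 = 1 := by simp
    rw [h2, h3] at h1
    have h4 : (MulEquiv.prodCongr (1 : MulAut G) (1 : MulAut H)).toMonoidHom
        = MonoidHom.id (G × H) := MonoidHom.ext fun _ => rfl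
    rw [h4, Subgroup.map_id] at h1
    exact h1.symm

lemma mem_stabSubgroup_iff (L : Subgroup (G × H)) (a : MulAut G × MulAut H) :
    a ∈ stabSubgroup L ↔ a ∈ stabSet L := Iff.rfl

variable (P : Subgroup G) (K : Subgroup P) [K.Normal] (η : H ≃* P ⧸ K)

lemma goursat_conj_mem (g : P) (h : H)
    (hg : (QuotientGroup.mk g : P ⧸ K) = η h) {x : G} {y : H}
    (hxy : (x, y) ∈ goursat P K η) :
    ((g : G) * x * (g : G)⁻¹, h * y * h⁻¹) ∈ goursat P K η := by
  obtain ⟨hx, hq⟩ := hxy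
  refine ⟨mul_mem (mul_mem g.2 hx) (inv_mem g.2), ?_⟩
  have : (QuotientGroup.mk (g * ⟨x, hx⟩ * g⁻¹ : P) : P ⧸ K) = η (h * y * h⁻¹) := by
    rw [QuotientGroup.mk_mul, QuotientGroup.mk_mul, QuotientGroup.mk_inv, hg, hq,
      map_mul, map_mul, map_inv]
  exact this

lemma conj_mem_stabSet (g : P) (h : H)
    (hg : (QuotientGroup.mk g : P ⧸ K) = η h) :
    (MulAut.conj (g : G), MulAut.conj h) ∈ stabSet (goursat P K η) := by
  show Subgroup.map _ _ = _
  ext ⟨x, y⟩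
  simp only [Subgroup.mem_map]
  constructor
  · rintro ⟨⟨a, b⟩, hab, heq⟩
    have h1 : (g : G) * a * (g : G)⁻¹ = x := congrArg Prod.fst heq
    have h2 : h * b * h⁻¹ = y := congrArg Prod.snd heq
    rw [← h1, ← h2]
    exact goursat_conj_mem P K η g h hg hab
  · intro hxy
    refine ⟨((g : G)⁻¹ * x * (g : G), h⁻¹ * y * h), ?_, ?_⟩
    · have hg' : (QuotientGroup.mk (g⁻¹ : P) : P ⧸ K) = η h⁻¹ := by
        rw [QuotientGroup.mk_inv, hg, map_inv]
      have := goursat_conj_mem P K η g⁻¹ h⁻¹ hg' hxy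
      simpa using this
    · show ((g : G) * ((g : G)⁻¹ * x * (g : G)) * (g : G)⁻¹, h * (h⁻¹ * y * h) * h⁻¹) = (x, y)
      simp only [Prod.mk.injEq]
      constructor <;> group

end Aux

section Sig
variable (H : Type) [Group H] [Fintype H] (W : FDRep ℂ (MulAut H))

noncomputable def sigma0 : W →ₗ[ℂ] W := ∑ h : H, W.ρ (MulAut.conj h)

omit [Fintype H] in
lemma conj_mul_aut (γ : MulAut H) (h : H) :
    γ * MulAut.conj h = MulAut.conj (γ h) * γ := by
  ext x
  simp [MulAut.conj_apply, map_mul, map_inv]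

lemma sigma0_comm (γ : MulAut H) : W.ρ γ * sigma0 H W = sigma0 H W * W.ρ γ := by
  unfold sigma0
  rw [Finset.mul_sum, Finset.sum_mul]
  rw [show (∑ h : H, W.ρ γ * W.ρ (MulAut.conj h)) = ∑ h : H, W.ρ (MulAut.conj (γ h)) * W.ρ γ by
    refine Finset.sum_congr rfl fun h _ => ?_
    rw [← map_mul, ← map_mul, conj_mul_aut]]
  exact Fintype.sum_equiv γ.toEquiv _ _ (fun h => rfl)

lemma ρconj_mul_sigma0 (h₀ : H) : W.ρ (MulAut.conj h₀) * sigma0 H W = sigma0 H W := by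
  unfold sigma0
  rw [Finset.mul_sum]
  rw [show (∑ h : H, W.ρ (MulAut.conj h₀) * W.ρ (MulAut.conj h))
      = ∑ h : H, W.ρ (MulAut.conj (h₀ * h)) by
    refine Finset.sum_congr rfl fun h _ => ?_
    rw [← map_mul, ← map_mul]]
  exact Fintype.sum_equiv (Equiv.mulLeft h₀) _ _ (fun h => rfl)

noncomputable def sigma0Hom : W ⟶ W :=
  ⟨ConcreteCategory.ofHom (C := FGModuleCat ℂ) (sigma0 H W), fun γ => by
    ext x
    exact LinearMap.congr_fun (sigma0_comm H W γ).symm x⟩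

lemma sigma0_inv_sum : (∑ h : H, W.ρ ((MulAut.conj h)⁻¹)) = sigma0 H W := by
  unfold sigma0
  exact Fintype.sum_equiv (Equiv.inv H) _ _ (fun h => by simp)

end Sig

/-- Let `L = {(g,h) | g ∈ P, gK = η(h)}` for a section `K ⊴ P ≤ G` and an isomorphism
`η : H ≃ P/K`. If `V` is an irreducible complex representation of `Aut(G)` on which
every inner automorphism of `G` acts as the identity, `W` is an irreducible complex
representation of `Aut(H)`, and `Σ_{(α,β) ∈ stab(L)} χ_V(α)·χ_W(β⁻¹) ≠ 0`, then every
inner automorphism of `H` acts as the identity on `W`. -/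
theorem statement4 (G H : Type) [Group G] [Group H] [Finite G] [Finite H]
    (P : Subgroup G) (K : Subgroup P) [K.Normal] (η : H ≃* P ⧸ K)
    (V : FDRep ℂ (MulAut G)) (W : FDRep ℂ (MulAut H)) [Simple V] [Simple W]
    (hV : ∀ α ∈ (MulAut.conj : G →* MulAut G).range, V.ρ α = 1)
    (hsum : (∑ᶠ ab ∈ stabSet (goursat P K η),
        V.character ab.1 * W.character ab.2⁻¹) ≠ 0) :
    ∀ β ∈ (MulAut.conj : H →* MulAut H).range, W.ρ β = 1 := by
  haveI : Finite (MulAut G) := Finite.of_injective (fun e => (e : G ≃ G))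
    fun a b h => by ext x; exact congrFun (congrArg Equiv.toFun h) x
  haveI : Finite (MulAut H) := Finite.of_injective (fun e => (e : H ≃ H))
    fun a b h => by ext x; exact congrFun (congrArg Equiv.toFun h) x
  haveI : Fintype (MulAut G × MulAut H) := Fintype.ofFinite _
  haveI : Fintype H := Fintype.ofFinite H
  classical
  set L := goursat P K η with hL
  set f : MulAut G × MulAut H → ℂ := fun ab => V.character ab.1 * W.character ab.2⁻¹ with hf
  -- convert the finsum to a sum over the stabilizer subgroup
  have hsum' : (∑ x : stabSubgroup L, f x) ≠ 0 := by
    have heq : ∑ᶠ ab ∈ stabSet L, f ab = ∑ x : stabSubgroup L, f x := by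
      rw [← Set.coe_toFinset (stabSet L), finsum_mem_coe_finset]
      exact Finset.sum_subtype _ (fun x => by rw [Set.mem_toFinset]; rfl) f
    rw [← heq]
    exact hsum
  -- Schur scalar
  obtain ⟨c, hc⟩ := CategoryTheory.endomorphism_simple_eq_smul_id (𝕜 := ℂ) (sigma0Hom H W)
  have hSig : sigma0 H W = c • (LinearMap.id : W →ₗ[ℂ] W) := by
    have := congrArg (fun f : W ⟶ W => f.hom.hom.hom) hc
    exact this.symm
  -- key translation identity
  have key : ∀ h₀ : H, (∑ x : stabSubgroup L, f x)
      = ∑ x : stabSubgroup L,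
          V.character (x : MulAut G × MulAut H).1
            * W.character ((x : MulAut G × MulAut H).2⁻¹ * (MulAut.conj h₀)⁻¹) := by
    intro h₀
    obtain ⟨p, hp⟩ := QuotientGroup.mk_surjective (η h₀)
    have hmem : (MulAut.conj (p : G), MulAut.conj h₀) ∈ stabSubgroup L :=
      conj_mem_stabSet P K η p h₀ hp
    set s₀ : stabSubgroup L := ⟨_, hmem⟩ with hs₀
    have hbij := Equiv.sum_comp (Equiv.mulLeft s₀) (fun x : stabSubgroup L => f x)
    rw [← hbij]
    refine Finset.sum_congr rfl fun x _ => ?_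
    show f ((s₀ * x : stabSubgroup L) : MulAut G × MulAut H) = _
    have hcoe : ((s₀ * x : stabSubgroup L) : MulAut G × MulAut H)
        = (MulAut.conj (p : G) * (x : MulAut G × MulAut H).1,
           MulAut.conj h₀ * (x : MulAut G × MulAut H).2) := rfl
    rw [hcoe, hf]
    dsimp only
    have hVchar : V.character (MulAut.conj (p : G) * (x : MulAut G × MulAut H).1)
        = V.character (x : MulAut G × MulAut H).1 := by
      simp only [FDRep.character, map_mul, hV (MulAut.conj (p : G)) ⟨(p : G), rfl⟩, one_mul]
    rw [hVchar, mul_inv_rev]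
  -- c ≠ 0
  have hc0 : c ≠ 0 := by
    intro h0
    have hSig0 : sigma0 H W = 0 := by rw [hSig, h0, zero_smul]
    have hzero : (Fintype.card H : ℂ) * (∑ x : stabSubgroup L, f x) = 0 := by
      have step1 : (Fintype.card H : ℂ) * (∑ x : stabSubgroup L, f x)
          = ∑ h₀ : H, ∑ x : stabSubgroup L,
              V.character (x : MulAut G × MulAut H).1
                * W.character ((x : MulAut G × MulAut H).2⁻¹ * (MulAut.conj h₀)⁻¹) := by
        rw [Finset.sum_congr rfl fun h₀ _ => (key h₀).symm, Finset.sum_const,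
          Finset.card_univ, nsmul_eq_mul]
      rw [step1, Finset.sum_comm]
      refine Finset.sum_eq_zero fun x _ => ?_
      have inner : ∑ h₀ : H,
          W.character ((x : MulAut G × MulAut H).2⁻¹ * (MulAut.conj h₀)⁻¹) = 0 := by
        have : ∀ h₀ : H, W.character ((x : MulAut G × MulAut H).2⁻¹ * (MulAut.conj h₀)⁻¹)
            = LinearMap.trace ℂ W
                (W.ρ (x : MulAut G × MulAut H).2⁻¹ * W.ρ ((MulAut.conj h₀)⁻¹)) := by
          intro h₀
          simp only [FDRep.character, map_mul]
        rw [Finset.sum_congr rfl fun h₀ _ => this h₀, ← map_sum (LinearMap.trace ℂ W),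
          ← Finset.mul_sum, sigma0_inv_sum, hSig0, mul_zero, map_zero]
      rw [← Finset.mul_sum, inner, mul_zero]
    rcases mul_eq_zero.mp hzero with h | h
    · exact Nat.cast_ne_zero.mpr Fintype.card_ne_zero h
    · exact hsum' h
  -- conclude
  rintro β ⟨h₀, rfl⟩
  have h1 := ρconj_mul_sigma0 H W h₀
  rw [hSig, mul_smul_comm] at h1
  have h1' : c • W.ρ (MulAut.conj h₀) = c • (LinearMap.id : W →ₗ[ℂ] W) := by
    simpa [Module.End.mul_eq_comp] using h1
  have h2 := smul_right_injective (W →ₗ[ℂ] W) hc0 h1'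
  exact h2
end

section
/- Let G, H, K, J be finite groups and let L ≤ G×H, M ≤ H×K, N ≤ K×J be subgroups. Then |k₂(L*M) ∩ k₁(N)| · |k₂(L) ∩ k₁(M)| = |k₂(L) ∩ k₁(M*N)| · |k₂(M) ∩ k₁(N)|, where the first and last intersections are taken inside K and the middle two inside H. (This identity expresses that κ(L,M) := |k₂(L) ∩ k₁(M)|/|H| is a 2-cocycle of the category of finite groups with subgroups of direct products as morphisms.) -/
/-- `k₂(L) = {h | (1,h) ∈ L}` for `L ≤ G×H`. -/
def ker2 {G H : Type*} [Group G] [Group H] (L : Subgroup (G × H)) : Subgroup H :=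
  L.comap (MonoidHom.inr G H)

lemma card_eq_map_snd {H K : Type*} [Group H] [Group K] (P : Subgroup (H × K)) :
    Nat.card P = Nat.card (P.map (MonoidHom.snd H K)) *
      Nat.card (P.comap (MonoidHom.inl H K)) := by
  classical
  set f : P →* K := (MonoidHom.snd H K).comp P.subtype with hf
  have hrange : f.range = P.map (MonoidHom.snd H K) := by
    rw [hf, MonoidHom.range_comp, Subgroup.range_subtype]
  have h1 : Nat.card P = Nat.card (P ⧸ f.ker) * Nat.card f.ker :=
    Subgroup.card_eq_card_quotient_mul_card_subgroup f.ker
  have h2 : Nat.card (P ⧸ f.ker) = Nat.card f.range :=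
    Nat.card_congr (QuotientGroup.quotientKerEquivRange f).toEquiv
  have e : f.ker ≃ (P.comap (MonoidHom.inl H K)) := by
    refine ⟨fun p => ⟨(p : P).1.1, ?_⟩, fun h => ⟨⟨((h : H), 1), h.2⟩, rfl⟩, ?_, ?_⟩
    · have hk : ((p : P) : H × K).2 = 1 := p.2
      have hm := (p : P).2
      rw [Subgroup.mem_comap]
      rwa [show (MonoidHom.inl H K) ((p : P) : H × K).1 = ((p : P) : H × K) by
        simp [Prod.ext_iff, hk]]
    · rintro ⟨⟨⟨h, k⟩, hP⟩, hk⟩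
      have hk' : k = 1 := hk
      subst hk'
      rfl
    · rintro ⟨h, hh⟩; rfl
  rw [h1, h2, hrange, Nat.card_congr e]

lemma card_eq_map_fst {H K : Type*} [Group H] [Group K] (P : Subgroup (H × K)) :
    Nat.card P = Nat.card (P.map (MonoidHom.fst H K)) *
      Nat.card (P.comap (MonoidHom.inr H K)) := by
  classical
  set f : P →* H := (MonoidHom.fst H K).comp P.subtype with hf
  have hrange : f.range = P.map (MonoidHom.fst H K) := by
    rw [hf, MonoidHom.range_comp, Subgroup.range_subtype]
  have h1 : Nat.card P = Nat.card (P ⧸ f.ker) * Nat.card f.ker :=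
    Subgroup.card_eq_card_quotient_mul_card_subgroup f.ker
  have h2 : Nat.card (P ⧸ f.ker) = Nat.card f.range :=
    Nat.card_congr (QuotientGroup.quotientKerEquivRange f).toEquiv
  have e : f.ker ≃ (P.comap (MonoidHom.inr H K)) := by
    refine ⟨fun p => ⟨(p : P).1.2, ?_⟩, fun h => ⟨⟨(1, (h : K)), h.2⟩, rfl⟩, ?_, ?_⟩
    · have hk : ((p : P) : H × K).1 = 1 := p.2
      have hm := (p : P).2
      rw [Subgroup.mem_comap]
      rwa [show (MonoidHom.inr H K) ((p : P) : H × K).2 = ((p : P) : H × K) by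
        simp [Prod.ext_iff, hk]]
    · rintro ⟨⟨⟨h, k⟩, hP⟩, hk⟩
      have hk' : h = 1 := hk
      subst hk'
      rfl
    · rintro ⟨h, hh⟩; rfl
  rw [h1, h2, hrange, Nat.card_congr e]

/-- For subgroups `L ≤ G×H`, `M ≤ H×K`, `N ≤ K×J` of direct products of finite groups,
`|k₂(L*M) ∩ k₁(N)| · |k₂(L) ∩ k₁(M)| = |k₂(L) ∩ k₁(M*N)| · |k₂(M) ∩ k₁(N)|`.
This identity expresses that `κ(L,M) := |k₂(L) ∩ k₁(M)|/|H|` is a 2-cocycle of the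
category of finite groups with subgroups of direct products as morphisms. -/
theorem statement9 (G H K J : Type*) [Group G] [Group H] [Group K] [Group J]
    [Finite G] [Finite H] [Finite K] [Finite J]
    (L : Subgroup (G × H)) (M : Subgroup (H × K)) (N : Subgroup (K × J)) :
    Nat.card ↥(ker2 (starProd L M) ⊓ ker1 N) * Nat.card ↥(ker2 L ⊓ ker1 M) =
      Nat.card ↥(ker2 L ⊓ ker1 (starProd M N)) * Nat.card ↥(ker2 M ⊓ ker1 N) := by
  set P : Subgroup (H × K) := M ⊓ (ker2 L).prod (ker1 N) with hP
  have h1 : P.map (MonoidHom.snd H K) = ker2 (starProd L M) ⊓ ker1 N := by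
    ext k
    simp only [Subgroup.mem_map, Subgroup.mem_inf, hP, Subgroup.mem_prod,
      ker1, ker2, Subgroup.mem_comap, MonoidHom.coe_snd, 
      starProd, Subgroup.mem_mk]
    constructor
    · rintro ⟨⟨h, k'⟩, ⟨hM, hL, hN⟩, rfl⟩
      exact ⟨⟨h, hL, hM⟩, hN⟩
    · rintro ⟨⟨h, hL, hM⟩, hN⟩
      exact ⟨(h, k), ⟨hM, hL, hN⟩, rfl⟩
  have h2 : P.comap (MonoidHom.inl H K) = ker2 L ⊓ ker1 M := by
    ext h
    simp only [Subgroup.mem_comap, Subgroup.mem_inf, hP, Subgroup.mem_prod,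
      ker1, ker2, Subgroup.mem_comap, MonoidHom.inr_apply]
    exact ⟨fun ⟨hM, hL, _⟩ => ⟨hL, hM⟩, fun ⟨hL, hM⟩ => ⟨hM, hL, N.one_mem⟩⟩
  have h3 : P.map (MonoidHom.fst H K) = ker2 L ⊓ ker1 (starProd M N) := by
    ext h
    simp only [Subgroup.mem_map, Subgroup.mem_inf, hP, Subgroup.mem_prod,
      ker1, ker2, Subgroup.mem_comap, MonoidHom.coe_fst, 
      starProd, Subgroup.mem_mk]
    constructor
    · rintro ⟨⟨h', k⟩, ⟨hM, hL, hN⟩, rfl⟩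
      exact ⟨hL, k, hM, hN⟩
    · rintro ⟨hL, k, hM, hN⟩
      exact ⟨(h, k), ⟨hM, hL, hN⟩, rfl⟩
  have h4 : P.comap (MonoidHom.inr H K) = ker2 M ⊓ ker1 N := by
    ext k
    simp only [Subgroup.mem_comap, Subgroup.mem_inf, hP, Subgroup.mem_prod,
      ker1, ker2, Subgroup.mem_comap, MonoidHom.inr_apply]
    exact ⟨fun ⟨hM, _, hN⟩ => ⟨hM, hN⟩, fun ⟨hM, hN⟩ => ⟨hM, L.one_mem, hN⟩⟩
  calc Nat.card ↥(ker2 (starProd L M) ⊓ ker1 N) * Nat.card ↥(ker2 L ⊓ ker1 M)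
      = Nat.card (P.map (MonoidHom.snd H K)) * Nat.card (P.comap (MonoidHom.inl H K)) := by
        rw [h1, h2]
    _ = Nat.card P := (card_eq_map_snd P).symm
    _ = Nat.card (P.map (MonoidHom.fst H K)) * Nat.card (P.comap (MonoidHom.inr H K)) :=
        card_eq_map_fst P
    _ = _ := by rw [h3, h4]
end

section
/- Let K, G, H be finite groups and let U ≤ K×G, L ≤ G×H be subgroups. Then the group q(U*L) = p₁(U*L)/k₁(U*L) is isomorphic to a subquotient of q(L) = p₁(L)/k₁(L), and also to a subquotient of q(U) = p₁(U)/k₁(U); that is, there exist subgroups B ⊴ A ≤ q(L) with A/B ≅ q(U*L), and similarly for q(U). -/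
/-- Abstract subquotient lemma: if `θ : W →* Q₁`, `ψ : W →* Q₂` with `ψ` surjective and
`θ.ker ≤ ψ.ker`, then `Q₂` is isomorphic to a subquotient of `Q₁`. -/
lemma subquot_of_homs {W Q₁ Q₂ : Type*} [Group W] [Group Q₁] [Group Q₂]
    (θ : W →* Q₁) (ψ : W →* Q₂) (hψ : Function.Surjective ψ)
    (hker : θ.ker ≤ ψ.ker) :
    ∃ (A : Subgroup Q₁) (B : Subgroup A) (_ : B.Normal),
      Nonempty (Q₂ ≃* (A ⧸ B)) := by
  let e : (W ⧸ θ.ker) ≃* θ.range := QuotientGroup.quotientKerEquivRange θ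
  let M : Subgroup (W ⧸ θ.ker) := ψ.ker.map (QuotientGroup.mk' θ.ker)
  haveI hMn : M.Normal :=
    ψ.normal_ker.map (QuotientGroup.mk' θ.ker) (QuotientGroup.mk'_surjective _)
  let B : Subgroup θ.range := M.map e.toMonoidHom
  haveI hBn : B.Normal := hMn.map e.toMonoidHom e.surjective
  refine ⟨θ.range, B, hBn, ⟨?_⟩⟩
  refine ((QuotientGroup.quotientKerEquivOfSurjective ψ hψ).symm.trans
    (QuotientGroup.quotientQuotientEquivQuotient θ.ker ψ.ker hker).symm).trans ?_
  exact QuotientGroup.congr M B e rfl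

/-- For subgroups `U ≤ K×G` and `L ≤ G×H` of direct products of finite groups, the
group `q(U*L)` is isomorphic to a subquotient of `q(L)`, and also to a subquotient of
`q(U)`: there exist subgroups `B ⊴ A ≤ q(L)` with `A/B ≅ q(U*L)`, and similarly
for `q(U)`. -/
theorem statement11 (K G H : Type*) [Group K] [Group G] [Group H]
    [Finite K] [Finite G] [Finite H]
    (U : Subgroup (K × G)) (L : Subgroup (G × H)) :
    (∃ (A : Subgroup (qGrp L)) (B : Subgroup A) (_ : B.Normal),
        Nonempty (qGrp (starProd U L) ≃* (A ⧸ B))) ∧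
    (∃ (A : Subgroup (qGrp U)) (B : Subgroup A) (_ : B.Normal),
        Nonempty (qGrp (starProd U L) ≃* (A ⧸ B))) := by
  constructor
  · -- subquotient of q(L); work with W = U ⊓ snd⁻¹(p₁ L)
    set W : Subgroup (K × G) :=
      U ⊓ Subgroup.comap (MonoidHom.snd K G) (proj1 L) with hW
    have memW : ∀ w : W, (w : K × G) ∈ U ∧ (w : K × G).2 ∈ proj1 L := by
      intro w
      exact ⟨w.2.1, w.2.2⟩
    -- θ : W →* qGrp L, sending w to the class of w.2
    let mL : W →* proj1 L :=
      { toFun := fun w => ⟨(w : K × G).2, (memW w).2⟩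
        map_one' := rfl
        map_mul' := fun _ _ => rfl }
    let θ : W →* qGrp L := (QuotientGroup.mk' _).comp mL
    -- ψ : W →* qGrp (U*L), sending w to the class of w.1
    have memP : ∀ w : W, (w : K × G).1 ∈ proj1 (starProd U L) := by
      intro w
      obtain ⟨hU, hp⟩ := memW w
      obtain ⟨x, hxL, hx1⟩ := Subgroup.mem_map.mp hp
      refine Subgroup.mem_map.mpr ⟨((w : K × G).1, x.2), ⟨(w : K × G).2, hU, ?_⟩, rfl⟩
      have : x = ((w : K × G).2, x.2) := by
        ext
        · exact hx1
        · rfl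
      rw [← this]; exact hxL
    let mP : W →* proj1 (starProd U L) :=
      { toFun := fun w => ⟨(w : K × G).1, memP w⟩
        map_one' := rfl
        map_mul' := fun _ _ => rfl }
    let ψ : W →* qGrp (starProd U L) := (QuotientGroup.mk' _).comp mP
    have hψ : Function.Surjective ψ := by
      intro q
      obtain ⟨y, rfl⟩ := QuotientGroup.mk'_surjective _ q
      obtain ⟨p, hpS, hp1⟩ := Subgroup.mem_map.mp y.2
      obtain ⟨g, hU, hL⟩ := hpS
      have hgp : g ∈ proj1 L := Subgroup.mem_map.mpr ⟨(g, p.2), hL, rfl⟩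
      refine ⟨⟨(p.1, g), hU, hgp⟩, ?_⟩
      show QuotientGroup.mk _ = QuotientGroup.mk y
      congr 1
      exact Subtype.ext hp1
    have hker : θ.ker ≤ ψ.ker := by
      intro w hw
      have h0 : θ w = 1 := hw
      have h1' : QuotientGroup.mk (mL w) = (1 : qGrp L) := h0
      have h1 : ((w : K × G).2, (1 : H)) ∈ L :=
        Subgroup.mem_subgroupOf.mp ((QuotientGroup.eq_one_iff (mL w)).mp h1')
      show ψ w = 1
      have : ((w : K × G).1 : K) ∈ ker1 (starProd U L) := by
        show ((w : K × G).1, (1 : H)) ∈ starProd U L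
        exact ⟨(w : K × G).2, (memW w).1, h1⟩
      exact (QuotientGroup.eq_one_iff (mP w)).mpr (Subgroup.mem_subgroupOf.mpr this)
    exact subquot_of_homs θ ψ hψ hker
  · -- subquotient of q(U); work with W = U*L
    set W : Subgroup (K × H) := starProd U L with hW
    have memU : ∀ w : W, (w : K × H).1 ∈ proj1 U := by
      intro w
      obtain ⟨g, hU, _⟩ := w.2
      exact Subgroup.mem_map.mpr ⟨((w : K × H).1, g), hU, rfl⟩
    let mU : W →* proj1 U :=
      { toFun := fun w => ⟨(w : K × H).1, memU w⟩
        map_one' := rfl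
        map_mul' := fun _ _ => rfl }
    let θ : W →* qGrp U := (QuotientGroup.mk' _).comp mU
    have memP : ∀ w : W, (w : K × H).1 ∈ proj1 (starProd U L) := by
      intro w
      exact Subgroup.mem_map.mpr ⟨(w : K × H), w.2, rfl⟩
    let mP : W →* proj1 (starProd U L) :=
      { toFun := fun w => ⟨(w : K × H).1, memP w⟩
        map_one' := rfl
        map_mul' := fun _ _ => rfl }
    let ψ : W →* qGrp (starProd U L) := (QuotientGroup.mk' _).comp mP
    have hψ : Function.Surjective ψ := by
      intro q
      obtain ⟨y, rfl⟩ := QuotientGroup.mk'_surjective _ q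
      obtain ⟨p, hpS, hp1⟩ := Subgroup.mem_map.mp y.2
      refine ⟨⟨p, hpS⟩, ?_⟩
      show QuotientGroup.mk _ = QuotientGroup.mk y
      congr 1
      exact Subtype.ext hp1
    have hker : θ.ker ≤ ψ.ker := by
      intro w hw
      have h0 : θ w = 1 := hw
      have h1' : QuotientGroup.mk (mU w) = (1 : qGrp U) := h0
      have h1 : ((w : K × H).1, (1 : G)) ∈ U :=
        Subgroup.mem_subgroupOf.mp ((QuotientGroup.eq_one_iff (mU w)).mp h1')
      show ψ w = 1
      have : ((w : K × H).1 : K) ∈ ker1 (starProd U L) := by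
        show ((w : K × H).1, (1 : H)) ∈ starProd U L
        exact ⟨1, h1, L.one_mem⟩
      exact (QuotientGroup.eq_one_iff (mP w)).mpr (Subgroup.mem_subgroupOf.mpr this)
    exact subquot_of_homs θ ψ hψ hker
end

section
/- Let Y and Z be finite groups, N ⊴ Y a normal subgroup, and U ≤ Y×Z a subgroup, so that the set product (N×{1})·U is a subgroup of Y×Z. Let χ : Y → ℂ be a function satisfying χ(n·y) = χ(y) for all n ∈ N and y ∈ Y, and let ψ : Z → ℂ be any function. Then Σ_{w ∈ (N×{1})·U} χ(w₁)·ψ(w₂) = (|N| / |(N×{1}) ∩ U|) · Σ_{u ∈ U} χ(u₁)·ψ(u₂), where w₁, w₂ denote the two components of w ∈ Y×Z. In particular, the left-hand sum is nonzero if and only if Σ_{u ∈ U} χ(u₁)·ψ(u₂) is nonzero. -/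
open Pointwise

/-- Let `Y`, `Z` be finite groups, `N ⊴ Y`, `U ≤ Y×Z`, and consider the subgroup
`(N×{1})·U` of `Y×Z` (a set product). Let `χ : Y → ℂ` satisfy `χ(n·y) = χ(y)` for all
`n ∈ N`, `y ∈ Y`, and let `ψ : Z → ℂ` be any function. Then
`Σ_{w ∈ (N×{1})·U} χ(w₁)·ψ(w₂) = (|N| / |(N×{1}) ∩ U|) · Σ_{u ∈ U} χ(u₁)·ψ(u₂)`.
In particular, the left-hand sum is nonzero iff `Σ_{u ∈ U} χ(u₁)·ψ(u₂)` is nonzero. -/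
theorem statement12 (Y Z : Type*) [Group Y] [Group Z] [Finite Y] [Finite Z]
    (N : Subgroup Y) (hN : N.Normal) (U : Subgroup (Y × Z))
    (χ : Y → ℂ) (hχ : ∀ n ∈ N, ∀ y : Y, χ (n * y) = χ y) (ψ : Z → ℂ) :
    ((∑ᶠ w ∈ ((N.prod (⊥ : Subgroup Z) : Subgroup (Y × Z)) : Set (Y × Z)) *
          (U : Set (Y × Z)), χ w.1 * ψ w.2) =
        ((Nat.card N : ℂ) / (Nat.card ↥(N.prod (⊥ : Subgroup Z) ⊓ U) : ℂ)) *
          ∑ᶠ u ∈ (U : Set (Y × Z)), χ u.1 * ψ u.2) ∧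
    ((∑ᶠ w ∈ ((N.prod (⊥ : Subgroup Z) : Subgroup (Y × Z)) : Set (Y × Z)) *
          (U : Set (Y × Z)), χ w.1 * ψ w.2) ≠ 0 ↔
        (∑ᶠ u ∈ (U : Set (Y × Z)), χ u.1 * ψ u.2) ≠ 0) := by
  classical
  have _ : Fintype (Y × Z) := Fintype.ofFinite _
  set K : Subgroup (Y × Z) := N.prod (⊥ : Subgroup Z) with hKdef
  set f : Y × Z → ℂ := fun w => χ w.1 * ψ w.2 with hfdef
  -- f is K-left-invariant
  have hfK : ∀ k ∈ K, ∀ w : Y × Z, f (k * w) = f w := by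
    rintro ⟨n, z⟩ hk ⟨y, w⟩
    rw [Subgroup.mem_prod, Subgroup.mem_bot] at hk
    obtain ⟨hn, rfl⟩ := hk
    simp only [hfdef, Prod.mk_mul_mk, one_mul]
    rw [hχ n hn y]
  have hKfin : ((K : Set (Y × Z)) * (U : Set (Y × Z))).Finite := Set.toFinite _
  have hUfin : ((U : Set (Y × Z))).Finite := Set.toFinite _
  set Kfin : Finset (Y × Z) := (Set.toFinite (K : Set (Y × Z))).toFinset
  set Ufin : Finset (Y × Z) := hUfin.toFinset
  set Mfin : Finset (Y × Z) := hKfin.toFinset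
  have hmemK : ∀ k, k ∈ Kfin ↔ k ∈ K := fun k => (Set.Finite.mem_toFinset _).trans SetLike.mem_coe
  have hmemU : ∀ u, u ∈ Ufin ↔ u ∈ U := fun u => (Set.Finite.mem_toFinset _).trans SetLike.mem_coe
  -- key counting identity
  have himage : (Kfin ×ˢ Ufin).image (fun p => p.1 * p.2) = Mfin := by
    ext w
    simp only [Finset.mem_image, Finset.mem_product, Mfin, Set.Finite.mem_toFinset,
      Set.mem_mul, hmemK, hmemU]
    constructor
    · rintro ⟨⟨k, u⟩, ⟨hk, hu⟩, rfl⟩; exact ⟨k, hk, u, hu, rfl⟩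
    · rintro ⟨k, hk, u, hu, rfl⟩; exact ⟨⟨k, u⟩, ⟨hk, hu⟩, rfl⟩
  have hfiber : ∀ w ∈ Mfin,
      (Finset.filter (fun p : (Y × Z) × (Y × Z) => p.1 * p.2 = w) (Kfin ×ˢ Ufin)).card
        = Nat.card ↥(K ⊓ U) := by
    intro w hw
    rw [Set.Finite.mem_toFinset, Set.mem_mul] at hw
    obtain ⟨k₀, hk₀, u₀, hu₀, rfl⟩ := hw
    have hIfin : ((K ⊓ U : Subgroup (Y × Z)) : Set (Y × Z)).Finite := Set.toFinite _
    rw [show Nat.card ↥(K ⊓ U) = hIfin.toFinset.card from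
      Nat.card_eq_card_finite_toFinset hIfin]
    apply Finset.card_bij' (fun p _ => p.2 * u₀⁻¹)
      (fun a _ => (k₀ * u₀ * (a * u₀)⁻¹, a * u₀))
    · intro p hp
      simp only [Finset.mem_filter, Finset.mem_product, hmemK, hmemU] at hp
      obtain ⟨⟨hpK, hpU⟩, hpe⟩ := hp
      simp only [Set.Finite.mem_toFinset, SetLike.mem_coe, Subgroup.mem_inf]
      constructor
      · have hk : k₀ = p.1 * p.2 * u₀⁻¹ := by rw [hpe]; group
        have : p.2 * u₀⁻¹ = p.1⁻¹ * k₀ := by rw [hk]; group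
        rw [this]; exact mul_mem (inv_mem hpK) hk₀
      · exact mul_mem hpU (inv_mem hu₀)
    · intro a ha
      simp only [Set.Finite.mem_toFinset, SetLike.mem_coe, Subgroup.mem_inf] at ha
      simp only [Finset.mem_filter, Finset.mem_product, hmemK, hmemU]
      refine ⟨⟨?_, mul_mem ha.2 hu₀⟩, by group⟩
      have : k₀ * u₀ * (a * u₀)⁻¹ = k₀ * a⁻¹ := by group
      rw [this]; exact mul_mem hk₀ (inv_mem ha.1)
    · intro p hp
      simp only [Finset.mem_filter] at hp
      have h2 : p.2 * u₀⁻¹ * u₀ = p.2 := by group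
      have h1 : k₀ * u₀ * (p.2 * u₀⁻¹ * u₀)⁻¹ = p.1 := by
        rw [h2, ← hp.2]; group
      rw [h1, h2]
    · intro a ha; group
  have hcardK : Kfin.card = Nat.card N := by
    have : Nat.card K = Nat.card N := by
      rw [hKdef, Nat.card_congr (Subgroup.prodEquiv N (⊥ : Subgroup Z)).toEquiv,
        Nat.card_prod, Subgroup.card_bot, mul_one]
    rw [← this]
    exact (Nat.card_eq_card_finite_toFinset (Set.toFinite (K : Set (Y × Z)))).symm
  have key : (Nat.card ↥(K ⊓ U) : ℂ) * ∑ w ∈ Mfin, f w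
      = (Nat.card N : ℂ) * ∑ u ∈ Ufin, f u := by
    have e1 : ∑ p ∈ Kfin ×ˢ Ufin, f (p.1 * p.2)
        = (Nat.card ↥(K ⊓ U) : ℂ) * ∑ w ∈ Mfin, f w := by
      rw [Finset.sum_comp f (fun p : (Y × Z) × (Y × Z) => p.1 * p.2), himage,
        Finset.mul_sum]
      refine Finset.sum_congr rfl fun w hw => ?_
      rw [hfiber w hw, nsmul_eq_mul]
    have e2 : ∑ p ∈ Kfin ×ˢ Ufin, f (p.1 * p.2)
        = (Nat.card N : ℂ) * ∑ u ∈ Ufin, f u := by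
      rw [Finset.sum_product]
      have : ∀ k ∈ Kfin, ∑ u ∈ Ufin, f (k * u) = ∑ u ∈ Ufin, f u := by
        intro k hk
        exact Finset.sum_congr rfl fun u _ => hfK k ((hmemK k).mp hk) u
      rw [Finset.sum_congr rfl this, Finset.sum_const, nsmul_eq_mul, hcardK]
    rw [← e1, e2]
  have hKU0 : (Nat.card ↥(K ⊓ U) : ℂ) ≠ 0 := by
    exact_mod_cast Nat.card_pos.ne'
  have hN0 : (Nat.card N : ℂ) ≠ 0 := by
    exact_mod_cast Nat.card_pos.ne'
  have hMsum : ∑ᶠ w ∈ ((K : Set (Y × Z)) * (U : Set (Y × Z))), f w = ∑ w ∈ Mfin, f w :=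
    finsum_mem_eq_finite_toFinset_sum f hKfin
  have hUsum : ∑ᶠ u ∈ (U : Set (Y × Z)), f u = ∑ u ∈ Ufin, f u :=
    finsum_mem_eq_finite_toFinset_sum f hUfin
  have main : ∑ᶠ w ∈ ((K : Set (Y × Z)) * (U : Set (Y × Z))), f w
      = ((Nat.card N : ℂ) / (Nat.card ↥(K ⊓ U) : ℂ)) * ∑ᶠ u ∈ (U : Set (Y × Z)), f u := by
    rw [hMsum, hUsum, div_mul_eq_mul_div, eq_div_iff hKU0, mul_comm]
    exact key
  refine ⟨main, ?_⟩
  rw [main]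
  constructor
  · intro h h0; rw [h0, mul_zero] at h; exact h rfl
  · intro h
    exact mul_ne_zero (div_ne_zero hN0 hKU0) h
end

section
/- Let Z be a finite group, M ⊴ Z a normal subgroup, and W an irreducible complex representation of Z with character χ_W. If not every element of M acts as the identity on W, then Σ_{m ∈ M} χ_W(z·m) = 0 for every z ∈ Z. -/
open CategoryTheory

/-- Let `Z` be a finite group, `M ⊴ Z` a normal subgroup, and `W` an irreducible
complex representation of `Z` with character `χ_W`. If not every element of `M` acts
as the identity on `W`, then `Σ_{m ∈ M} χ_W(z·m) = 0` for every `z ∈ Z`. -/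
theorem statement13 (Z : Type) [Group Z] [Finite Z] (M : Subgroup Z) (hM : M.Normal)
    (W : FDRep ℂ Z) [Simple W]
    (h : ¬ ∀ m ∈ M, W.ρ m = 1) :
    ∀ z : Z, (∑ᶠ m ∈ (M : Set Z), W.character (z * m)) = 0 := by
  classical
  haveI := Fintype.ofFinite Z
  set P : W →ₗ[ℂ] W := ∑ m : M, W.ρ m with hP
  have comm : ∀ g : Z, W.ρ g * P = P * W.ρ g := by
    intro g
    let e : M ≃ M := ⟨fun m => ⟨g * m * g⁻¹, hM.conj_mem m.1 m.2 g⟩,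
      fun m => ⟨g⁻¹ * m * g, by simpa using hM.conj_mem m.1 m.2 g⁻¹⟩,
      fun m => by ext; simp [mul_assoc], fun m => by ext; simp [mul_assoc]⟩
    rw [hP, Finset.mul_sum, Finset.sum_mul]
    refine Fintype.sum_equiv e _ _ fun m => ?_
    show W.ρ g * W.ρ (m : Z) = W.ρ ((g * m * g⁻¹ : Z)) * W.ρ g
    rw [← map_mul, ← map_mul]
    congr 1
    group
  -- package as a morphism in FDRep and apply Schur's lemma
  let φ : W ⟶ W := ⟨ConcreteCategory.ofHom P, fun g => by
    ext v; exact congrArg (fun f => f v) (comm g).symm⟩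
  obtain ⟨c, hc⟩ := CategoryTheory.endomorphism_simple_eq_smul_id (𝕜 := ℂ) φ
  have hchom : c • LinearMap.id (R := ℂ) (M := W) = P := congrArg (fun f => f.hom.hom.hom) hc
  -- absorption: ρ m₀ * P = P for m₀ ∈ M
  have absorb : ∀ m₀ : M, W.ρ (m₀ : Z) * P = P := by
    intro m₀
    rw [hP, Finset.mul_sum]
    refine Fintype.sum_equiv (Equiv.mulLeft m₀) _ _ fun m => ?_
    show W.ρ (m₀ : Z) * W.ρ (m : Z) = W.ρ ((m₀ * m : M) : Z)
    rw [← map_mul]; rfl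
  -- c must be 0
  have hc0 : c = 0 := by
    by_contra hc0
    apply h
    intro m hm
    have := absorb ⟨m, hm⟩
    rw [← hchom] at this
    have h2 : c • (W.ρ m * LinearMap.id) = c • (LinearMap.id (R := ℂ) (M := W)) := by
      rw [← this]; ext v; simp
    have := smul_right_injective (W →ₗ[ℂ] W) hc0 h2
    simpa [← Module.End.one_eq_id] using this
  have hP0 : P = 0 := by rw [← hchom, hc0, zero_smul]
  intro z
  have hfin : ∑ᶠ m ∈ (M : Set Z), W.character (z * m)
      = ∑ m : M, W.character (z * m) := by
    rw [finsum_mem_eq_finite_toFinset_sum _ (Set.toFinite (M : Set Z))]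
    refine Finset.sum_subtype _ (fun x => ?_) _
    exact Set.Finite.mem_toFinset _
  rw [hfin]
  have : ∀ m : M, W.character (z * m) = LinearMap.trace ℂ W (W.ρ z * W.ρ (m : Z)) := by
    intro m; rw [← map_mul]; rfl
  simp_rw [this]
  rw [← map_sum, ← Finset.mul_sum, ← hP, hP0, mul_zero, map_zero]
end
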